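/- arXiv:1601.06464 — 3 statements merged into one kernel-verified Lean document; each statement's English description precedes it below -/
import Mathlib

section
/- Let $U_j \subset \mathbb{R}^s$ be compact sets and $a_j: \mathbb{R}^s \to \mathbb{R}^n$, $b_j: \mathbb{R}^s \to \mathbb{R}$ be affine maps for $j = 1,\dots,q$. Assume the cone $C := \mathrm{cone}\{(a_j(u_j), b_j(u_j)) \mid u_j \in U_j,\ j = 1,\dots,q\}$ (the smallest convex cone containing these points and the origin) is closed, and assume there exists $x_0 \in \mathbb{R}^n$ with $a_j(u_j)^\top x_0 \le b_j(u_j)$ for all $u_j \in U_j$ and all $j$. If every $x \in \mathbb{R}^n$ satisfying $a_j(u_j)^\top x \le b_j(u_j)$ for all $u_j \in U_j$, $j = 1,\dots,q$ also satisfies $\wp^\top x \ge r$, then $(-\wp, -r)$ belongs to the closed convex cone generated by $\{(0_n, 1)\} \cup \{(a_j(u_j), b_j(u_j)) \mid u_j \in U_j,\ j = 1,\dots,q\}$, and in fact this cone is already closed. -/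
open Matrix BigOperators

/-- The convex conical hull `ℝ₊ · conv Ω`. -/
def coneHull {E : Type*} [AddCommGroup E] [Module ℝ E] (S : Set E) : Set E :=
  {x | ∃ t : ℝ, 0 ≤ t ∧ ∃ y ∈ convexHull ℝ S, x = t • y}

section lemmas
variable {E : Type*} [AddCommGroup E] [Module ℝ E] {S T : Set E} {x y : E}

lemma mem_coneHull_of_mem (hx : x ∈ S) : x ∈ coneHull S :=
  ⟨1, zero_le_one, x, subset_convexHull ℝ S hx, (one_smul ℝ x).symm⟩

lemma coneHull_mono (h : S ⊆ T) : coneHull S ⊆ coneHull T := by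
  rintro z ⟨t, ht, u, hu, rfl⟩
  exact ⟨t, ht, u, convexHull_mono h hu, rfl⟩

lemma coneHull_smul_mem {t : ℝ} (ht : 0 ≤ t) (hx : x ∈ coneHull S) : t • x ∈ coneHull S := by
  obtain ⟨c, hc, u, hu, rfl⟩ := hx
  exact ⟨t * c, mul_nonneg ht hc, u, hu, smul_smul t c u⟩

lemma coneHull_convex : Convex ℝ (coneHull (E := E) S) := by
  rintro x ⟨c, hc, u, hu, rfl⟩ y ⟨d, hd, w, hw, rfl⟩ α β hα hβ hαβ
  rcases eq_or_lt_of_le (by positivity : (0:ℝ) ≤ α * c + β * d) with h0 | hpos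
  · have h1 : α * c = 0 ∧ β * d = 0 := by
      constructor <;> nlinarith [mul_nonneg hα hc, mul_nonneg hβ hd]
    refine ⟨0, le_refl 0, u, hu, ?_⟩
    rw [smul_smul, smul_smul, h1.1, h1.2, zero_smul, zero_smul, add_zero]
  · set σ := α * c + β * d with hσ
    refine ⟨σ, le_of_lt hpos, (α*c/σ) • u + (β*d/σ) • w, ?_, ?_⟩
    · exact (convex_convexHull ℝ S) hu hw (by positivity) (by positivity) (by field_simp; exact hσ.symm)
    · rw [smul_add, smul_smul, smul_smul, smul_smul, smul_smul,
        mul_div_cancel₀ _ (ne_of_gt hpos), mul_div_cancel₀ _ (ne_of_gt hpos)]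

lemma coneHull_add_mem (hx : x ∈ coneHull S) (hy : y ∈ coneHull S) : x + y ∈ coneHull S := by
  have h := coneHull_convex hx hy (by norm_num : (0:ℝ) ≤ 1/2) (by norm_num : (0:ℝ) ≤ 1/2)
    (by norm_num)
  have h2 := coneHull_smul_mem (by norm_num : (0:ℝ) ≤ 2) h
  convert h2 using 1
  rw [smul_add, smul_smul, smul_smul]
  norm_num

lemma coneHull_nonneg {L : E →ₗ[ℝ] ℝ} (hS : ∀ z ∈ S, 0 ≤ L z) (hx : x ∈ coneHull S) :
    0 ≤ L x := by
  obtain ⟨t, ht, u, hu, rfl⟩ := hx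
  have hu' : 0 ≤ L u :=
    convexHull_min hS (convex_halfSpace_ge (LinearMap.isLinear L) 0) hu
  rw [LinearMap.map_smul, smul_eq_mul]
  exact mul_nonneg ht hu'

lemma coneHull_insert_eq (v : E) (S : Set E) :
    coneHull (insert v S) =
      {z | ∃ t : ℝ, 0 ≤ t ∧ ∃ a ∈ coneHull S ∪ {0}, z = a + t • v} := by
  ext z; constructor
  · rintro ⟨t, ht, y, hy, rfl⟩
    rcases S.eq_empty_or_nonempty with rfl | hS
    · rw [show insert v (∅ : Set E) = {v} from by ext; simp, convexHull_singleton,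
        Set.mem_singleton_iff] at hy
      subst hy
      exact ⟨t, ht, 0, Or.inr rfl, (zero_add _).symm⟩
    · rw [convexHull_insert hS] at hy
      obtain ⟨v', hv', y', hy', hseg⟩ := mem_convexJoin.1 hy
      rw [Set.mem_singleton_iff] at hv'
      subst hv'
      obtain ⟨α, β, hα, hβ, hαβ, rfl⟩ := hseg
      refine ⟨t*α, by positivity, (t*β) • y', Or.inl ⟨t*β, by positivity, y', hy', rfl⟩, ?_⟩
      rw [smul_add, smul_smul, smul_smul, add_comm]
  · rintro ⟨t, ht, w, hw, rfl⟩
    have hv : t • v ∈ coneHull (insert v S) :=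
      coneHull_smul_mem ht (mem_coneHull_of_mem (Set.mem_insert v S))
    rcases hw with hw | rfl
    · exact coneHull_add_mem (coneHull_mono (Set.subset_insert v S) hw) hv
    · simpa using hv

end lemmas

lemma isClosed_add_ray {F : Type*} [NormedAddCommGroup F] [NormedSpace ℝ F]
    (A : Set F) (hA : IsClosed A)
    (hcone : ∀ t : ℝ, 0 ≤ t → ∀ x ∈ A, t • x ∈ A) (v : F) (hv : -v ∉ A) :
    IsClosed {z | ∃ t : ℝ, 0 ≤ t ∧ ∃ a ∈ A, z = a + t • v} := by
  apply IsSeqClosed.isClosed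
  intro x z hx hlim
  choose t ht c hc hxeq using hx
  obtain ⟨M, hM0, hM⟩ : ∃ M : ℝ, 0 ≤ M ∧ ∀ k, ‖x k‖ ≤ M := by
    have hbd : BddAbove (Set.range fun k => ‖x k‖) :=
      (hlim.norm).bddAbove_range
    obtain ⟨M, hM⟩ := hbd
    exact ⟨M, le_trans (norm_nonneg _) (hM ⟨0, rfl⟩), fun k => hM ⟨k, rfl⟩⟩
  have hbddt : BddAbove (Set.range t) := by
    by_contra hub
    apply hv
    rw [← hA.closure_eq]
    rw [Metric.mem_closure_iff]
    intro ε hε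
    obtain ⟨y, ⟨k, rfl⟩, hk⟩ := not_bddAbove_iff.1 hub (max (M/ε) 0)
    have htk : 0 < t k := lt_of_le_of_lt (le_max_right _ _) hk
    refine ⟨(t k)⁻¹ • c k, hcone _ (inv_nonneg.2 htk.le) _ (hc k), ?_⟩
    have : (t k)⁻¹ • c k - (-v) = (t k)⁻¹ • x k := by
      rw [hxeq k, smul_add, smul_smul, inv_mul_cancel₀ htk.ne', one_smul]
      abel
    rw [dist_eq_norm, norm_sub_rev, this, norm_smul]
    rw [Real.norm_eq_abs, abs_of_pos (inv_pos.2 htk)]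
    calc (t k)⁻¹ * ‖x k‖ ≤ (t k)⁻¹ * M :=
          mul_le_mul_of_nonneg_left (hM k) (inv_nonneg.2 htk.le)
      _ < ε := by
          rw [inv_mul_lt_iff₀ htk]
          have : M / ε < t k := lt_of_le_of_lt (le_max_left _ _) hk
          calc M = (M / ε) * ε := by field_simp
            _ < t k * ε := by exact mul_lt_mul_of_pos_right this hε
  obtain ⟨B, hB⟩ := hbddt
  have htmem : ∀ k, t k ∈ Set.Icc (0:ℝ) B := fun k => ⟨ht k, hB ⟨k, rfl⟩⟩
  obtain ⟨l, hl, φ, hφ, hφt⟩ := (isCompact_Icc).tendsto_subseq htmem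
  have hclim : Filter.Tendsto (fun k => c (φ k)) Filter.atTop (nhds (z - l • v)) := by
    have h1 : Filter.Tendsto (fun k => x (φ k)) Filter.atTop (nhds z) :=
      hlim.comp (hφ.tendsto_atTop)
    have h2 : Filter.Tendsto (fun k => t (φ k) • v) Filter.atTop (nhds (l • v)) :=
      hφt.smul_const v
    have h3 := h1.sub h2
    convert h3 using 1
    funext k
    rw [hxeq (φ k)]
    abel
  have hmem : z - l • v ∈ A :=
    hA.mem_of_tendsto hclim (Filter.Eventually.of_forall fun k => hc (φ k))
  exact ⟨l, hl.1, z - l • v, hmem, by abel⟩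

/-- helper: from `∀ c ≥ 0, c * α ≤ β` conclude `α ≤ 0`. -/
lemma nonpos_of_forall_smul_le {α β : ℝ} (h : ∀ c : ℝ, 0 ≤ c → c * α ≤ β) : α ≤ 0 := by
  by_contra h'
  push_neg at h'
  have hβ : 0 ≤ β := by simpa using h 0 le_rfl
  have := h ((β + 1) / α) (by positivity)
  rw [div_mul_cancel₀ _ (ne_of_gt h')] at this
  linarith

/-- generalized non-homogeneous Farkas lemma (core cone statement). -/
theorem generalized_farkas (n s q : ℕ) (U : Fin q → Set (Fin s → ℝ))
    (hU : ∀ j, IsCompact (U j))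
    (a : Fin q → ((Fin s → ℝ) →ᵃ[ℝ] (Fin n → ℝ)))
    (b : Fin q → ((Fin s → ℝ) →ᵃ[ℝ] ℝ))
    (C : Set ((Fin n → ℝ) × ℝ))
    (hC : C = coneHull {p : (Fin n → ℝ) × ℝ | ∃ j, ∃ u ∈ U j, p = (a j u, b j u)})
    (hCclosed : IsClosed C)
    (hfeas : ∃ x0 : Fin n → ℝ, ∀ j, ∀ u ∈ U j, (a j u) ⬝ᵥ x0 ≤ b j u)
    (p : Fin n → ℝ) (r : ℝ)
    (himp : ∀ x : Fin n → ℝ, (∀ j, ∀ u ∈ U j, (a j u) ⬝ᵥ x ≤ b j u) → r ≤ p ⬝ᵥ x) :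
    (-p, -r) ∈ closure (coneHull (insert ((0 : Fin n → ℝ), (1:ℝ))
        {p : (Fin n → ℝ) × ℝ | ∃ j, ∃ u ∈ U j, p = (a j u, b j u)})) ∧
      IsClosed (coneHull (insert ((0 : Fin n → ℝ), (1:ℝ))
        {p : (Fin n → ℝ) × ℝ | ∃ j, ∃ u ∈ U j, p = (a j u, b j u)})) := by
  obtain ⟨x0, hx0⟩ := hfeas
  set S' : Set ((Fin n → ℝ) × ℝ) :=
    {p : (Fin n → ℝ) × ℝ | ∃ j, ∃ u ∈ U j, p = (a j u, b j u)} with hS'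
  set v : (Fin n → ℝ) × ℝ := ((0 : Fin n → ℝ), (1:ℝ)) with hvdef
  -- the linear functional (z, τ) ↦ τ - x0 ⬝ᵥ z, nonnegative on S'
  set L : ((Fin n → ℝ) × ℝ) →ₗ[ℝ] ℝ :=
    { toFun := fun pr => pr.2 - x0 ⬝ᵥ pr.1
      map_add' := by
        intro pr qr
        simp only [Prod.snd_add, Prod.fst_add, dotProduct_add]
        ring
      map_smul' := by
        intro c pr
        simp only [Prod.smul_snd, Prod.smul_fst, dotProduct_smul, smul_eq_mul,
          RingHom.id_apply]
        ring } with hLdef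
  have hLS : ∀ z ∈ S', 0 ≤ L z := by
    rintro z ⟨j, u, hu, rfl⟩
    have h := hx0 j u hu
    simp only [hLdef, LinearMap.coe_mk, AddHom.coe_mk]
    rw [dotProduct_comm] at h
    linarith
  -- `(0, -1)` is not in `C ∪ {0}`
  have hnv : -v ∉ C ∪ {0} := by
    rintro (hmem | hmem)
    · rw [hC] at hmem
      have h := coneHull_nonneg hLS hmem
      simp only [hLdef, hvdef, LinearMap.coe_mk, AddHom.coe_mk, Prod.snd_neg,
        Prod.fst_neg, dotProduct_neg, neg_zero, dotProduct_zero, sub_zero] at h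
      linarith
    · rw [Set.mem_singleton_iff, Prod.ext_iff] at hmem
      have h := hmem.2
      norm_num [hvdef] at h
  -- closedness of the big cone
  have hKclosed : IsClosed (coneHull (insert v S')) := by
    rw [coneHull_insert_eq v S', ← hC]
    apply isClosed_add_ray
    · exact hCclosed.union isClosed_singleton
    · rintro t ht x (hx | hx)
      · rw [hC] at hx ⊢
        exact Or.inl (coneHull_smul_mem ht hx)
      · rw [Set.mem_singleton_iff] at hx
        subst hx
        exact Or.inr (by simp)
    · exact hnv
  refine ⟨subset_closure ?_, hKclosed⟩
  -- membership via separation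
  by_contra hnot
  obtain ⟨f, u0, hsep, hu0⟩ :=
    geometric_hahn_banach_closed_point (coneHull_convex) hKclosed hnot
  have h0K : (0 : (Fin n → ℝ) × ℝ) ∈ coneHull (insert v S') :=
    ⟨0, le_rfl, v, subset_convexHull ℝ _ (Set.mem_insert v S'), (zero_smul ℝ v).symm⟩
  have hu0pos : 0 < u0 := by
    have h := hsep 0 h0K
    simpa using h
  have key : ∀ y ∈ coneHull (insert v S'), f y ≤ 0 := by
    intro y hy
    by_contra hpos
    push_neg at hpos
    have hc : (0:ℝ) ≤ (u0 + 1) / f y := by positivity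
    have h := hsep _ (coneHull_smul_mem hc hy)
    rw [ContinuousLinearMap.map_smul, smul_eq_mul, div_mul_cancel₀ _ (ne_of_gt hpos)] at h
    linarith
  -- decompose f
  set w : Fin n → ℝ :=
    fun i => f (((fun j => if i = j then 1 else 0) : Fin n → ℝ), (0:ℝ)) with hwdef
  set s0 : ℝ := f (((0:Fin n → ℝ), (1:ℝ))) with hs0def
  have hf : ∀ (z : Fin n → ℝ) (τ : ℝ), f (z, τ) = z ⬝ᵥ w + τ * s0 := by
    intro z τ
    have h1 : ((z, τ) : (Fin n → ℝ) × ℝ)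
        = ((z, (0:ℝ)) : (Fin n → ℝ) × ℝ) + τ • (((0:Fin n → ℝ), (1:ℝ))) := by
      simp [Prod.ext_iff]
    rw [h1, map_add, ContinuousLinearMap.map_smul, smul_eq_mul]
    congr 1
    have h2 := LinearMap.pi_apply_eq_sum_univ
      ((f : ((Fin n → ℝ) × ℝ) →L[ℝ] ℝ).toLinearMap.comp (LinearMap.inl ℝ (Fin n → ℝ) ℝ)) z
    simp only [LinearMap.comp_apply, LinearMap.inl_apply, ContinuousLinearMap.coe_coe] at h2
    rw [h2, dotProduct]
    exact Finset.sum_congr rfl fun i _ => by rw [smul_eq_mul]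
  -- consequences of separation
  have hs0 : s0 ≤ 0 := by
    have h := key v (mem_coneHull_of_mem (Set.mem_insert v S'))
    rw [hvdef] at h
    rw [hs0def]
    exact h
  have hju : ∀ j, ∀ u ∈ U j, (a j u) ⬝ᵥ w + (b j u) * s0 ≤ 0 := by
    intro j u hu
    have hmem : ((a j u, b j u) : (Fin n → ℝ) × ℝ) ∈ coneHull (insert v S') :=
      mem_coneHull_of_mem (Set.mem_insert_of_mem v ⟨j, u, hu, rfl⟩)
    have h := key _ hmem
    rwa [hf] at h
  have hcontra : 0 < (-p) ⬝ᵥ w + (-r) * s0 := by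
    have h := hf (-p) (-r)
    rw [h] at hu0
    linarith
  rcases lt_or_eq_of_le hs0 with hs0lt | hs0eq
  · -- s0 < 0
    set x : Fin n → ℝ := (-s0)⁻¹ • w with hxdef
    have hfeasx : ∀ j, ∀ u ∈ U j, (a j u) ⬝ᵥ x ≤ b j u := by
      intro j u hu
      have h := hju j u hu
      have hpos : (0:ℝ) < -s0 := by linarith
      rw [hxdef, dotProduct_smul, smul_eq_mul, inv_mul_le_iff₀ hpos]
      nlinarith
    have hr := himp x hfeasx
    rw [hxdef, dotProduct_smul, smul_eq_mul] at hr
    have hpos : (0:ℝ) < -s0 := by linarith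
    have hps : (-s0) * r ≤ p ⬝ᵥ w := (le_inv_mul_iff₀ hpos).1 hr
    rw [neg_dotProduct] at hcontra
    nlinarith
  · -- s0 = 0
    have haw : ∀ j, ∀ u ∈ U j, (a j u) ⬝ᵥ w ≤ 0 := by
      intro j u hu
      have h := hju j u hu
      rw [hs0eq, mul_zero, add_zero] at h
      exact h
    have hpw : 0 ≤ p ⬝ᵥ w := by
      have hall : ∀ τ : ℝ, 0 ≤ τ → r - p ⬝ᵥ x0 ≤ τ * (p ⬝ᵥ w) := by
        intro τ hτ
        have hfeasx : ∀ j, ∀ u ∈ U j, (a j u) ⬝ᵥ (x0 + τ • w) ≤ b j u := by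
          intro j u hu
          rw [dotProduct_add, dotProduct_smul, smul_eq_mul]
          have h1 := hx0 j u hu
          have h2 := haw j u hu
          nlinarith
        have h := himp _ hfeasx
        rw [dotProduct_add, dotProduct_smul, smul_eq_mul] at h
        linarith
      have := nonpos_of_forall_smul_le (α := -(p ⬝ᵥ w)) (β := p ⬝ᵥ x0 - r)
        (fun c hc => by have := hall c hc; linarith)
      linarith
    rw [hs0eq, mul_zero, add_zero, neg_dotProduct] at hcontra
    linarith
end

section
/- Let $U_1,\dots,U_q \subset \mathbb{R}^s$ be compact convex sets and $F_j : \mathbb{R}^s \to \mathbb{R}^{n+1}$ affine maps. Suppose there exists $\hat{x} \in \mathbb{R}^n$ such that, writing $F_j(u_j) = (a_j(u_j), b_j(u_j))$, the strict Slater condition $a_j(u_j)^\top \hat{x} < b_j(u_j)$ holds for all $u_j \in U_j$ and all $j = 1,\dots,q$. Then $0_{n+1} \notin \mathrm{conv}\big(\bigcup_{j=1}^q F_j(U_j)\big)$, and the cone $C := \mathrm{cone}\big(\bigcup_{j=1}^q F_j(U_j)\big)$ is closed. -/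
open Matrix BigOperators

/-- The convex hull of a compact set in a finite-dimensional normed space is compact. -/
lemma isCompact_convexHull_fd {E : Type*} [NormedAddCommGroup E] [NormedSpace ℝ E]
    [FiniteDimensional ℝ E] {s : Set E} (hs : IsCompact s) :
    IsCompact (convexHull ℝ s) := by
  rcases s.eq_empty_or_nonempty with rfl | ⟨x₀, hx₀⟩
  · simp
  set d := Module.finrank ℝ E + 1 with hd
  have hmain : convexHull ℝ s =
      (fun p : (Fin d → ℝ) × (Fin d → E) => ∑ i, p.1 i • p.2 i) ''
        ((stdSimplex ℝ (Fin d)) ×ˢ (Set.univ.pi fun _ : Fin d => s)) := by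
    apply Set.Subset.antisymm
    · intro x hx
      rw [convexHull_eq_union] at hx
      simp only [Set.mem_iUnion] at hx
      obtain ⟨t, hts, hai, hx⟩ := hx
      have hcard : t.card ≤ d := by
        have h1 := hai.card_le_finrank_succ
        have h2 : Module.finrank ℝ (vectorSpan ℝ (Set.range ((↑) : t → E))) ≤
            Module.finrank ℝ E := Submodule.finrank_le _
        simp only [Fintype.card_coe] at h1
        omega
      rw [Finset.convexHull_eq] at hx
      obtain ⟨w, hw0, hw1, hwx⟩ := hx
      rw [Finset.centerMass_eq_of_sum_1 _ _ hw1] at hwx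
      simp only [id_eq] at hwx
      obtain ⟨g⟩ : Nonempty (↥t ↪ Fin d) := by
        apply Function.Embedding.nonempty_of_card_le
        simpa [Fintype.card_coe] using hcard
      set w' : Fin d → ℝ := Function.extend (fun y : ↥t => g y) (fun y => w y) 0 with hw'
      set z' : Fin d → E := Function.extend (fun y : ↥t => g y) (fun y => (y : E))
        (fun _ => x₀) with hz'
      have hginj : Function.Injective (fun y : ↥t => g y) := g.injective
      have happly : ∀ y : ↥t, w' (g y) = w y ∧ z' (g y) = y := fun y =>
        ⟨hginj.extend_apply _ _ _, hginj.extend_apply _ _ _⟩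
      have hnot : ∀ i : Fin d, (¬ ∃ y : ↥t, g y = i) → w' i = 0 ∧ z' i = x₀ := by
        intro i hi
        exact ⟨Function.extend_apply' _ _ _ hi, Function.extend_apply' _ _ _ hi⟩
      set A : Finset (Fin d) := Finset.univ.image (fun y : ↥t => g y) with hA
      have hsum_eq : ∀ (f : Fin d → E), (∀ i ∉ A, f i = 0) →
          ∑ i, f i = ∑ y : ↥t, f (g y) := by
        intro f hf
        rw [← Finset.sum_subset (Finset.subset_univ A) (fun i _ hi => hf i hi)]
        rw [hA, Finset.sum_image (fun a _ b _ h => hginj h)]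
      have hAmem : ∀ i : Fin d, i ∉ A → ¬ ∃ y : ↥t, g y = i := by
        intro i hi ⟨y, hy⟩
        exact hi (Finset.mem_image.mpr ⟨y, Finset.mem_univ y, hy⟩)
      refine ⟨⟨w', z'⟩, ⟨⟨?_, ?_⟩, ?_⟩, ?_⟩
      · intro i
        show 0 ≤ w' i
        by_cases hi : ∃ y : ↥t, g y = i
        · obtain ⟨y, rfl⟩ := hi
          rw [(happly y).1]
          exact hw0 y y.2
        · rw [(hnot i hi).1]
      · show ∑ i, w' i = 1
        rw [← Finset.sum_subset (Finset.subset_univ A)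
          (fun i _ hi => (hnot i (hAmem i hi)).1)]
        rw [hA, Finset.sum_image (fun a _ b _ h => hginj h)]
        calc ∑ y : ↥t, w' (g y) = ∑ y : ↥t, w y := by
              exact Finset.sum_congr rfl fun y _ => (happly y).1
          _ = ∑ y ∈ t, w y := Finset.sum_coe_sort t w
          _ = 1 := hw1
      · intro i _
        show z' i ∈ s
        by_cases hi : ∃ y : ↥t, g y = i
        · obtain ⟨y, rfl⟩ := hi
          rw [(happly y).2]
          exact hts y.2
        · rw [(hnot i hi).2]; exact hx₀
      · show ∑ i, w' i • z' i = x
        rw [hsum_eq (fun i => w' i • z' i) (fun i hi => by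
          show w' i • z' i = 0
          rw [(hnot i (hAmem i hi)).1, zero_smul])]
        calc ∑ y : ↥t, w' (g y) • z' (g y) = ∑ y : ↥t, w (y : E) • (y : E) := by
              exact Finset.sum_congr rfl fun y _ => by rw [(happly y).1, (happly y).2]
          _ = ∑ y ∈ t, w y • (y : E) := Finset.sum_coe_sort t (fun y => w y • y)
          _ = x := hwx
    · rintro x ⟨⟨w, z⟩, ⟨hw, hz⟩, rfl⟩
      exact (convex_convexHull ℝ s).sum_mem (fun i _ => hw.1 i) hw.2
        (fun i _ => subset_convexHull ℝ s (hz i (Set.mem_univ i)))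
  rw [hmain]
  refine ((isCompact_stdSimplex (𝕜 := ℝ) (ι := Fin d)).prod (isCompact_univ_pi fun _ => hs)).image ?_
  exact continuous_finset_sum _ fun i _ =>
    ((continuous_apply i).comp continuous_fst).smul ((continuous_apply i).comp continuous_snd)

/-- under the Slater condition the cone is closed. -/
theorem slater_closed_cone (n s q : ℕ) (U : Fin q → Set (Fin s → ℝ))
    (hUc : ∀ j, IsCompact (U j)) (hUconv : ∀ j, Convex ℝ (U j))
    (F : Fin q → ((Fin s → ℝ) →ᵃ[ℝ] ((Fin n → ℝ) × ℝ)))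
    (xhat : Fin n → ℝ)
    (hslater : ∀ j, ∀ u ∈ U j, (F j u).1 ⬝ᵥ xhat < (F j u).2) :
    (0 : (Fin n → ℝ) × ℝ) ∉ convexHull ℝ (⋃ j, F j '' U j) ∧
      IsClosed (coneHull (⋃ j, F j '' U j)) := by
  set Ω : Set ((Fin n → ℝ) × ℝ) := ⋃ j, F j '' U j with hΩdef
  have hcont : ∀ j, Continuous (F j) := fun j => (F j).continuous_of_finiteDimensional
  have hΩc : IsCompact Ω := isCompact_iUnion fun j => (hUc j).image (hcont j)
  set φ : (Fin n → ℝ) × ℝ → ℝ := fun x => x.2 - x.1 ⬝ᵥ xhat with hφdef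
  have hφlin : IsLinearMap ℝ φ := by
    constructor
    · intro a b; simp only [hφdef, Prod.fst_add, Prod.snd_add, add_dotProduct]; ring
    · intro c a
      simp only [hφdef, Prod.smul_fst, Prod.smul_snd, smul_dotProduct, smul_eq_mul]; ring
  have hΩpos : ∀ x ∈ Ω, 0 < φ x := by
    intro x hx
    simp only [hΩdef, Set.mem_iUnion, Set.mem_image] at hx
    obtain ⟨j, u, hu, rfl⟩ := hx
    have := hslater j u hu
    simp only [hφdef]; linarith
  have hKpos : ∀ x ∈ convexHull ℝ Ω, 0 < φ x := by
    intro x hx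
    exact convexHull_min (fun y hy => hΩpos y hy) (convex_halfSpace_gt hφlin 0) hx
  have h0 : (0 : (Fin n → ℝ) × ℝ) ∉ convexHull ℝ Ω := by
    intro h
    have := hKpos 0 h
    simp [hφdef] at this
  refine ⟨h0, ?_⟩
  set K := convexHull ℝ Ω with hKdef
  have hKc : IsCompact K := isCompact_convexHull_fd hΩc
  by_cases hKne : K.Nonempty
  · obtain ⟨y0, hy0K, hy0min⟩ := hKc.exists_isMinOn hKne continuous_norm.continuousOn
    set δ := ‖y0‖ with hδdef
    have hδpos : 0 < δ := by
      rw [hδdef, norm_pos_iff]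
      intro h; exact h0 (h ▸ hy0K)
    apply IsSeqClosed.isClosed
    intro x l hx hl
    choose t ht y hy hxy using hx
    obtain ⟨M, hM⟩ : ∃ M, ∀ k, ‖x k‖ ≤ M := by
      obtain ⟨R, hR⟩ := (Metric.isBounded_iff_subset_closedBall 0).mp
        (Metric.isBounded_range_of_tendsto x hl)
      exact ⟨R, fun k => by
        have := hR (Set.mem_range_self k)
        simpa [Metric.mem_closedBall, dist_zero_right] using this⟩
    have htmem : ∀ k, t k ∈ Set.Icc (0 : ℝ) (M / δ) := by
      intro k
      refine ⟨ht k, ?_⟩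
      have h1 : δ ≤ ‖y k‖ := hy0min (hy k)
      have h2 : ‖x k‖ = t k * ‖y k‖ := by
        rw [hxy k, norm_smul, Real.norm_eq_abs, abs_of_nonneg (ht k)]
      have h3 : t k * δ ≤ M := by
        calc t k * δ ≤ t k * ‖y k‖ := by nlinarith [ht k]
          _ = ‖x k‖ := h2.symm
          _ ≤ M := hM k
      rw [le_div_iff₀ hδpos]; linarith
    obtain ⟨t0, ht0mem, ψ1, hψ1, hψ1t⟩ := isCompact_Icc.tendsto_subseq htmem
    obtain ⟨z0, hz0K, ψ2, hψ2, hψ2y⟩ := hKc.tendsto_subseq (fun k => hy (ψ1 k))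
    have h1 : Filter.Tendsto (fun k => t (ψ1 (ψ2 k))) Filter.atTop (nhds t0) :=
      hψ1t.comp hψ2.tendsto_atTop
    have h2 : Filter.Tendsto (fun k => x (ψ1 (ψ2 k))) Filter.atTop (nhds (t0 • z0)) := by
      have : Filter.Tendsto (fun k => t (ψ1 (ψ2 k)) • y (ψ1 (ψ2 k)))
          Filter.atTop (nhds (t0 • z0)) := h1.smul hψ2y
      simpa only [← hxy] using this
    have h3 : Filter.Tendsto (fun k => x (ψ1 (ψ2 k))) Filter.atTop (nhds l) :=
      hl.comp ((hψ1.comp hψ2).tendsto_atTop)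
    have hleq : l = t0 • z0 := tendsto_nhds_unique h3 h2
    exact ⟨t0, ht0mem.1, z0, hz0K, hleq⟩
  · have hempty : coneHull Ω = ∅ := by
      rw [Set.eq_empty_iff_forall_notMem]
      rintro x ⟨t, -, y, hy, -⟩
      exact hKne ⟨y, hy⟩
    rw [hempty]; exact isClosed_empty
end

section
/- Let $f : \mathbb{R}^s \to \mathbb{R}$ be defined by $f(u) = u^\top u - 1$ and let $g(u) = c^\top u + d$ be affine with $c \in \mathbb{R}^s$, $d \in \mathbb{R}$. Then $g(u) \le 0$ for all $u$ with $\|u\| \le 1$ if and only if $\|c\| + d \le 0$, which in turn holds if and only if there exists $\lambda \ge 0$ such that the $(s+1)\times(s+1)$ symmetric matrix $\begin{pmatrix} \lambda I_s & -\frac{1}{2} c \\ -\frac{1}{2} c^\top & -\lambda - d \end{pmatrix}$ is positive semidefinite. -/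
open Matrix BigOperators RealInnerProductSpace

/-- the S-lemma for a linear function over the unit ball. -/
theorem s_lemma_linear_ball (s : ℕ) (c : EuclideanSpace ℝ (Fin s)) (d : ℝ)
    (M : ℝ → Matrix (Fin s ⊕ Unit) (Fin s ⊕ Unit) ℝ)
    (hM : ∀ lam, M lam = fun p q =>
      match p, q with
      | Sum.inl i, Sum.inl j => if i = j then lam else 0
      | Sum.inl i, Sum.inr _ => -(c i) / 2
      | Sum.inr _, Sum.inl i => -(c i) / 2
      | Sum.inr _, Sum.inr _ => -lam - d) :
    ((∀ u : EuclideanSpace ℝ (Fin s), ‖u‖ ≤ 1 → ⟪c, u⟫ + d ≤ 0) ↔ ‖c‖ + d ≤ 0) ∧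
      ((‖c‖ + d ≤ 0) ↔ ∃ lam : ℝ, 0 ≤ lam ∧
        ∀ x : Fin s ⊕ Unit → ℝ, 0 ≤ x ⬝ᵥ (M lam *ᵥ x)) := by
  have hinner : ∀ u : EuclideanSpace ℝ (Fin s), ⟪c, u⟫ = ∑ i, c i * u i := by
    intro u
    simp [PiLp.inner_apply, RCLike.inner_apply, conj_trivial]
    exact Finset.sum_congr rfl fun i _ => mul_comm _ _
  have hnormsq : ∀ u : EuclideanSpace ℝ (Fin s), ∑ i, (u i)^2 = ‖u‖^2 := by
    intro u
    rw [EuclideanSpace.norm_eq, Real.sq_sqrt (by positivity)]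
    simp [Real.norm_eq_abs, sq_abs]
  have form : ∀ lam (x : Fin s ⊕ Unit → ℝ), x ⬝ᵥ (M lam *ᵥ x) =
      lam * (∑ i, x (Sum.inl i)^2)
      - (∑ i, c i * x (Sum.inl i)) * x (Sum.inr ())
      - (lam + d) * (x (Sum.inr ()))^2 := by
    intro lam x
    simp only [hM, dotProduct, mulVec, dotProduct, Fintype.sum_sum_type,
      Finset.univ_unique, Finset.sum_singleton, ite_mul, zero_mul, Finset.sum_ite_eq,
      Finset.mem_univ, if_true]
    have hA : ∑ i, x (Sum.inl i) * (lam * x (Sum.inl i) + -c i / 2 * x (Sum.inr default))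
        = lam * (∑ i, x (Sum.inl i)^2) - (∑ i, c i * x (Sum.inl i)) * x (Sum.inr ()) / 2 := by
      rw [Finset.mul_sum, Finset.sum_mul, Finset.sum_div, ← Finset.sum_sub_distrib]
      exact Finset.sum_congr rfl fun i _ => by ring
    have hB : x (Sum.inr default) * (∑ i, -c i / 2 * x (Sum.inl i) + (-lam - d) * x (Sum.inr default))
        = -((∑ i, c i * x (Sum.inl i)) * x (Sum.inr ()) / 2) - (lam + d) * (x (Sum.inr ()))^2 := by
      rw [mul_add, Finset.mul_sum, Finset.sum_mul, Finset.sum_div, ← Finset.sum_neg_distrib]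
      rw [Finset.sum_congr rfl fun i _ => (by ring :
        x (Sum.inr default) * (-c i / 2 * x (Sum.inl i)) = -(c i * x (Sum.inl i) * x (Sum.inr default) / 2))]
      ring
    rw [hA, hB]; ring
  constructor
  · constructor
    · intro h
      by_cases hc : c = 0
      · simpa [hc] using h 0 (by simp)
      · have hcn : (0:ℝ) < ‖c‖ := norm_pos_iff.2 hc
        have h1 := h ((‖c‖)⁻¹ • c) (by
          rw [norm_smul, norm_inv, norm_norm, inv_mul_cancel₀ hcn.ne'])
        rw [real_inner_smul_right, real_inner_self_eq_norm_sq] at h1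
        have : (‖c‖)⁻¹ * ‖c‖^2 = ‖c‖ := by field_simp
        linarith [this ▸ h1]
    · intro h u hu
      have h1 := real_inner_le_norm c u
      nlinarith [norm_nonneg c, norm_nonneg u]
  · constructor
    · intro h
      refine ⟨‖c‖/2, by positivity, fun x => ?_⟩
      rw [form]
      set u : EuclideanSpace ℝ (Fin s) := (WithLp.toLp 2 (fun i => x (Sum.inl i))) with hu
      set t := x (Sum.inr ()) with ht
      have h1 : ∑ i, x (Sum.inl i)^2 = ‖u‖^2 := hnormsq u
      have h2 : ∑ i, c i * x (Sum.inl i) = ⟪c, u⟫ := (hinner u).symm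
      rw [h1, h2]
      have h3 := abs_real_inner_le_norm c u
      rw [abs_le] at h3
      rcases le_total 0 t with htt | htt
      · nlinarith [mul_nonneg htt (sub_nonneg.2 h3.2),
          mul_nonneg (norm_nonneg c) (sq_nonneg (‖u‖ - t)), sq_nonneg t]
      · nlinarith [mul_nonneg (neg_nonneg.2 htt) (sub_nonneg.2 (neg_le.1 h3.1)),
          mul_nonneg (norm_nonneg c) (sq_nonneg (‖u‖ + t)), sq_nonneg t]
    · rintro ⟨lam, hlam, hpsd⟩
      by_cases hc : c = 0
      · have h0 := hpsd (Sum.elim 0 1)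
        rw [form] at h0
        simp at h0
        simp [hc]
        linarith
      · have hcn : (0:ℝ) < ‖c‖ := norm_pos_iff.2 hc
        have h0 := hpsd (Sum.elim (fun i => c i / ‖c‖) (fun _ => 1))
        rw [form] at h0
        simp only [Sum.elim_inl, Sum.elim_inr] at h0
        have hsum : ∑ i, (c i)^2 = ‖c‖^2 := hnormsq c
        have e1 : ∑ i, (c i / ‖c‖)^2 = 1 := by
          rw [Finset.sum_congr rfl fun i _ => div_pow (c i) ‖c‖ 2, ← Finset.sum_div, hsum,
            div_self (by positivity)]
        have e2 : ∑ i, c i * (c i / ‖c‖) = ‖c‖ := by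
          rw [Finset.sum_congr rfl fun i _ => (by ring : c i * (c i / ‖c‖) = (c i)^2 / ‖c‖),
            ← Finset.sum_div, hsum, sq, mul_div_assoc, div_self hcn.ne', mul_one]
        rw [e1, e2] at h0
        nlinarith [h0]
end
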